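/- Let M be the star with countably many branches, with metric d₁([x,m],[y,n]) = |x − y|/m if m = n and x/m + y/n otherwise, and define f : M → ℝ by f([x,n]) = x (well-defined on the quotient). Then f is geodesically convex on (M, d₁): for every geodesic γ from p to q and every t ∈ [0,1], f(γ(t)) ≤ (1 − t) f(p) + t f(q). -/

import Mathlib

/-- Points of `[0,1] × ℕ≥1`: countably many copies of the unit interval. -/
abbrev StarPoint : Type := Set.Icc (0:ℝ) 1 × {n : ℕ // 1 ≤ n}

/-- The gluing relation: `(x,m) ∼ (y,n) ↔ (x = y = 0) ∨ (x = y ∧ m = n)`. -/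
def starSetoid : Setoid StarPoint where
  r a b := (a.1.1 = 0 ∧ b.1.1 = 0) ∨ (a.1.1 = b.1.1 ∧ a.2 = b.2)
  iseqv := by
    constructor
    · intro a; exact Or.inr ⟨rfl, rfl⟩
    · rintro a b (⟨h1, h2⟩ | ⟨h1, h2⟩)
      · exact Or.inl ⟨h2, h1⟩
      · exact Or.inr ⟨h1.symm, h2.symm⟩
    · rintro a b c (⟨h1, h2⟩ | ⟨h1, h2⟩) (⟨g1, g2⟩ | ⟨g1, g2⟩)
      · exact Or.inl ⟨h1, g2⟩
      · exact Or.inl ⟨h1, g1 ▸ h2⟩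
      · exact Or.inl ⟨h1.trans g1, g2⟩
      · exact Or.inr ⟨h1.trans g1, h2.trans g2⟩

/-- The star with countably many branches: the quotient of `[0,1] × ℕ≥1` gluing all the
origins together. -/
def StarSpace : Type := Quotient starSetoid

/-- The distance `d₁((x,m),(y,n)) = |x-y|/m` if `m = n`, and `x/m + y/n` otherwise. -/
noncomputable def d1 (a b : StarPoint) : ℝ :=
  if a.2 = b.2 then |a.1.1 - b.1.1| / (a.2.1 : ℝ)
  else a.1.1 / (a.2.1 : ℝ) + b.1.1 / (b.2.1 : ℝ)

lemma d1_self (a : StarPoint) : d1 a a = 0 := by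
  unfold d1; rw [if_pos rfl, sub_self, abs_zero, zero_div]

lemma d1_comm (a b : StarPoint) : d1 a b = d1 b a := by
  unfold d1
  rcases eq_or_ne a.2 b.2 with h | h
  · rw [if_pos h, if_pos h.symm, abs_sub_comm, h]
  · rw [if_neg h, if_neg (Ne.symm h), add_comm]

lemma d1_triangle (a b c : StarPoint) : d1 a c ≤ d1 a b + d1 b c := by
  obtain ⟨⟨x, hx0, hx1⟩, m⟩ := a
  obtain ⟨⟨y, hy0, hy1⟩, n⟩ := b
  obtain ⟨⟨z, hz0, hz1⟩, k⟩ := c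
  have hm : (0:ℝ) < (m.1 : ℝ) := by exact_mod_cast m.2
  have hn : (0:ℝ) < (n.1 : ℝ) := by exact_mod_cast n.2
  have hk : (0:ℝ) < (k.1 : ℝ) := by exact_mod_cast k.2
  unfold d1
  dsimp only
  rcases eq_or_ne m n with hmn | hmn <;> rcases eq_or_ne n k with hnk | hnk
  · subst hmn; subst hnk
    rw [if_pos rfl, if_pos rfl, if_pos rfl, ← add_div]
    gcongr
    exact abs_sub_le x y z
  · subst hmn
    rw [if_neg hnk, if_pos rfl, if_neg hnk]
    have h1 : x / (m.1:ℝ) ≤ (|x - y| + y) / (m.1:ℝ) := by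
      gcongr
      have := le_abs_self (x - y); linarith
    rw [add_div] at h1
    linarith
  · subst hnk
    rw [if_neg hmn, if_neg hmn, if_pos rfl]
    have h1 : z / (n.1:ℝ) ≤ (|y - z| + y) / (n.1:ℝ) := by
      gcongr
      have := le_abs_self (z - y); rw [abs_sub_comm] at this; linarith
    rw [add_div] at h1
    linarith
  · have hyn : 0 ≤ y / (n.1:ℝ) := div_nonneg hy0 hn.le
    rcases eq_or_ne m k with hmk | hmk
    · subst hmk
      rw [if_pos rfl, if_neg hmn, if_neg hnk]
      have h0 : |x - z| ≤ x + z := by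
        rw [abs_sub_le_iff]; constructor <;> linarith
      have h1 : |x - z| / (m.1:ℝ) ≤ (x + z) / (m.1:ℝ) := by gcongr
      rw [add_div] at h1
      linarith
    · rw [if_neg hmk, if_neg hmn, if_neg hnk]
      linarith

lemma d1_rel_of_eq_zero {a b : StarPoint} (h : d1 a b = 0) : starSetoid.r a b := by
  have hm : (0:ℝ) < (a.2.1 : ℝ) := by exact_mod_cast a.2.2
  have hn : (0:ℝ) < (b.2.1 : ℝ) := by exact_mod_cast b.2.2
  unfold d1 at h
  split_ifs at h with hab
  · refine Or.inr ⟨?_, hab⟩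
    have := div_eq_zero_iff.mp h
    rcases this with h' | h'
    · have : a.1.1 - b.1.1 = 0 := abs_eq_zero.mp h'
      linarith
    · exact absurd h' hm.ne'
  · have h1 : 0 ≤ a.1.1 / (a.2.1 : ℝ) := div_nonneg a.1.2.1 hm.le
    have h2 : 0 ≤ b.1.1 / (b.2.1 : ℝ) := div_nonneg b.1.2.1 hn.le
    have ha : a.1.1 / (a.2.1 : ℝ) = 0 := by linarith
    have hb : b.1.1 / (b.2.1 : ℝ) = 0 := by linarith
    refine Or.inl ⟨?_, ?_⟩
    · rcases div_eq_zero_iff.mp ha with h' | h'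
      · exact h'
      · exact absurd h' hm.ne'
    · rcases div_eq_zero_iff.mp hb with h' | h'
      · exact h'
      · exact absurd h' hn.ne'

lemma d1_of_fst_eq_zero {a : StarPoint} (b : StarPoint) (ha : a.1.1 = 0) :
    d1 a b = b.1.1 / (b.2.1 : ℝ) := by
  unfold d1
  split_ifs with h
  · rw [ha, h, zero_sub, abs_neg, abs_of_nonneg b.1.2.1]
  · rw [ha, zero_div, zero_add]

lemma d1_congr_left {a₁ a₂ : StarPoint} (b : StarPoint) (h : starSetoid.r a₁ a₂) :
    d1 a₁ b = d1 a₂ b := by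
  rcases h with ⟨h1, h2⟩ | ⟨h1, h2⟩
  · rw [d1_of_fst_eq_zero b h1, d1_of_fst_eq_zero b h2]
  · have : a₁ = a₂ := Prod.ext (Subtype.ext h1) h2
    rw [this]

/-- `d₁` descends to the quotient. -/
noncomputable def starDist1 : StarSpace → StarSpace → ℝ :=
  Quotient.lift₂ d1 (fun a₁ b₁ a₂ b₂ ha hb => by
    calc d1 a₁ b₁ = d1 a₂ b₁ := d1_congr_left b₁ ha
    _ = d1 b₁ a₂ := d1_comm _ _
    _ = d1 b₂ a₂ := d1_congr_left a₂ hb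
    _ = d1 a₂ b₂ := d1_comm _ _)

/-- The star with countably many branches, as a metric space for `d₁`. -/
noncomputable instance StarSpace.metricSpace : MetricSpace StarSpace where
  dist := starDist1
  dist_self := by
    rintro ⟨a⟩; exact d1_self a
  dist_comm := by
    rintro ⟨a⟩ ⟨b⟩; exact d1_comm a b
  dist_triangle := by
    rintro ⟨a⟩ ⟨b⟩ ⟨c⟩; exact d1_triangle a b c
  eq_of_dist_eq_zero := by
    rintro ⟨a⟩ ⟨b⟩ h
    exact Quotient.sound (d1_rel_of_eq_zero h)

/-- The class of a point of `[0,1] × ℕ≥1` in the star. -/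
def StarSpace.mk (a : StarPoint) : StarSpace := Quotient.mk starSetoid a

lemma StarSpace.dist_mk (a b : StarPoint) :
    dist (StarSpace.mk a) (StarSpace.mk b) = d1 a b := rfl

/-- The origin of the star: the common class of the points `(0, n)`. -/
def StarSpace.origin : StarSpace := StarSpace.mk (⟨0, by norm_num⟩, ⟨1, le_refl 1⟩)

/-- A geodesic from `p` to `q` in a metric space, parametrized by `[0,1]`
(proportionally to arclength). -/
def IsGeodesic {X : Type*} [MetricSpace X] (p q : X) (γ : Set.Icc (0:ℝ) 1 → X) : Prop :=
  γ ⟨0, by norm_num⟩ = p ∧ γ ⟨1, by norm_num⟩ = q ∧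
    ∀ s t : Set.Icc (0:ℝ) 1, dist (γ s) (γ t) = |(s:ℝ) - (t:ℝ)| * dist p q

/-- Geodesic convexity for a real-valued function on a metric space. -/
def GeodesicallyConvexReal {X : Type*} [MetricSpace X] (f : X → ℝ) : Prop :=
  ∀ (p q : X) (γ : Set.Icc (0:ℝ) 1 → X), IsGeodesic p q γ →
    ∀ t : Set.Icc (0:ℝ) 1, f (γ t) ≤ (1 - (t:ℝ)) * f p + (t:ℝ) * f q

/-- The height function `f [x, n] = x`, well-defined on the quotient. -/
def starF : StarSpace → ℝ :=
  Quotient.lift (fun a : StarPoint => a.1.1) (by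
    rintro a b (⟨h1, h2⟩ | ⟨h1, h2⟩) <;> try dsimp only
    · rw [h1, h2]
    · exact h1)

lemma sameBranchIneq (x y z : ℝ) (h : |x - z| + |z - y| = |x - y|) :
    z * |x - y| ≤ |z - y| * x + |x - z| * y := by
  rcases abs_cases (x - z) with ⟨e1, f1⟩ | ⟨e1, f1⟩ <;>
  rcases abs_cases (z - y) with ⟨e2, f2⟩ | ⟨e2, f2⟩ <;>
  rcases abs_cases (x - y) with ⟨e3, f3⟩ | ⟨e3, f3⟩ <;>
  rw [e1, e2, e3] at h ⊢ <;>
  first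
  | nlinarith
  | (have hz : z = x := by linarith
     subst hz; nlinarith)
  | (have hz : z = y := by linarith
     subst hz; nlinarith)

lemma d1_key (a b c : StarPoint) (h : d1 a c + d1 c b = d1 a b) :
    c.1.1 * d1 a b ≤ d1 c b * a.1.1 + d1 a c * b.1.1 := by
  obtain ⟨⟨x, hx0, hx1⟩, m⟩ := a
  obtain ⟨⟨y, hy0, hy1⟩, n⟩ := b
  obtain ⟨⟨z, hz0, hz1⟩, k⟩ := c
  have hm : (0:ℝ) < (m.1 : ℝ) := by exact_mod_cast m.2
  have hn : (0:ℝ) < (n.1 : ℝ) := by exact_mod_cast n.2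
  have hk : (0:ℝ) < (k.1 : ℝ) := by exact_mod_cast k.2
  unfold d1 at h ⊢
  dsimp only at h ⊢
  rcases eq_or_ne m k with hmk | hmk <;> rcases eq_or_ne k n with hkn | hkn
  · -- all same branch
    subst hmk; subst hkn
    rw [if_pos rfl, if_pos rfl, if_pos rfl] at h ⊢
    have h' : |x - z| + |z - y| = |x - y| := by
      field_simp at h; linarith
    have := sameBranchIneq x y z h'
    calc z * (|x - y| / (m.1:ℝ)) = (z * |x - y|) / (m.1:ℝ) := by ring
      _ ≤ (|z - y| * x + |x - z| * y) / (m.1:ℝ) := by gcongr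
      _ = |z - y| / (m.1:ℝ) * x + |x - z| / (m.1:ℝ) * y := by ring
  · -- m = k, k ≠ n, so m ≠ n
    subst hmk
    rw [if_pos rfl, if_neg hkn, if_neg hkn] at h ⊢
    have h0 : |x - z| / (m.1:ℝ) + z / (m.1:ℝ) = x / (m.1:ℝ) := by linarith
    have hzx : |x - z| + z = x := by field_simp at h0; linarith
    have h1 : z ≤ x := by have := abs_nonneg (x - z); linarith
    have h2 : |x - z| = x - z := by have := le_abs_self (x - z); linarith
    rw [h2]
    have key' : z * y ≤ x * y := mul_le_mul_of_nonneg_right h1 hy0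
    have e1 : z * y / (n.1:ℝ) ≤ x * y / (n.1:ℝ) := by gcongr
    have e2 : z * y / (m.1:ℝ) ≤ x * y / (m.1:ℝ) := by gcongr
    calc z * (x / (m.1:ℝ) + y / (n.1:ℝ))
        = z * x / (m.1:ℝ) + z * y / (n.1:ℝ) := by ring
      _ ≤ z * x / (m.1:ℝ) + x * y / (n.1:ℝ) + (x*y/(m.1:ℝ) - z*y/(m.1:ℝ)) := by linarith
      _ = (z / (m.1:ℝ) + y / (n.1:ℝ)) * x + (x - z) / (m.1:ℝ) * y := by ring
  · -- k = n, m ≠ k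
    subst hkn
    rw [if_neg hmk, if_pos rfl, if_neg hmk] at h ⊢
    have h0 : z / (k.1:ℝ) + |z - y| / (k.1:ℝ) = y / (k.1:ℝ) := by linarith
    have hzy : z + |z - y| = y := by field_simp at h0; linarith
    have h1 : z ≤ y := by have := abs_nonneg (z - y); linarith
    have h2 : |z - y| = y - z := by
      have := le_abs_self (z - y); have := neg_abs_le (z - y); linarith
    rw [h2]
    have key' : z * x ≤ y * x := mul_le_mul_of_nonneg_right h1 hx0
    have e2 : z * x / (m.1:ℝ) ≤ y * x / (m.1:ℝ) := by gcongr
    have e3 : 0 ≤ (y - z) * x / (k.1:ℝ) :=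
      div_nonneg (mul_nonneg (by linarith) hx0) hk.le
    calc z * (x / (m.1:ℝ) + y / (k.1:ℝ))
        = z * x / (m.1:ℝ) + z * y / (k.1:ℝ) := by ring
      _ ≤ y * x / (m.1:ℝ) + z * y / (k.1:ℝ) + (y - z) * x / (k.1:ℝ) := by linarith
      _ = (y - z) / (k.1:ℝ) * x + (x / (m.1:ℝ) + z / (k.1:ℝ)) * y := by ring
  · -- k differs from both m and n
    rw [if_neg hmk, if_neg hkn] at h ⊢
    have h4 : 0 ≤ y / (n.1:ℝ) * x := mul_nonneg (div_nonneg hy0 hn.le) hx0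
    have h5 : 0 ≤ x / (m.1:ℝ) * y := mul_nonneg (div_nonneg hx0 hm.le) hy0
    by_cases hmn : m = n
    · rw [if_pos hmn] at h ⊢
      subst hmn
      have habs : |x - y| ≤ x + y := by
        rcases abs_cases (x - y) with ⟨e, _⟩ | ⟨e, _⟩ <;> rw [e] <;> linarith
      have hz : z = 0 := by
        have h1 : |x - y| / (m.1:ℝ) ≤ (x + y) / (m.1:ℝ) := by gcongr
        rw [add_div] at h1
        have h2 : 0 ≤ z / (k.1:ℝ) := div_nonneg hz0 hk.le
        have h3 : z / (k.1:ℝ) = 0 := by linarith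
        rcases div_eq_zero_iff.mp h3 with h' | h'
        · exact h'
        · exact absurd h' hk.ne'
      subst hz
      simp only [zero_mul, zero_div, zero_add, add_zero]
      linarith
    · rw [if_neg hmn] at h ⊢
      have hz : z = 0 := by
        have h2 : 0 ≤ z / (k.1:ℝ) := div_nonneg hz0 hk.le
        have h3 : z / (k.1:ℝ) = 0 := by linarith
        rcases div_eq_zero_iff.mp h3 with h' | h'
        · exact h'
        · exact absurd h' hk.ne'
      subst hz
      simp only [zero_mul, zero_div, zero_add, add_zero]
      linarith

lemma d1_fst_eq_of_eq_zero {a b : StarPoint} (h : d1 a b = 0) : a.1.1 = b.1.1 := by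
  rcases d1_rel_of_eq_zero h with ⟨u, v⟩ | ⟨u, _⟩
  · rw [u, v]
  · exact u

/-- The function `f [x,n] = x` is geodesically convex on the star with
countably many branches equipped with the metric `d₁`. -/
theorem starF_geodesicallyConvex_d1 : GeodesicallyConvexReal starF := by
  rintro p q γ ⟨hp, hq, hd⟩ t
  obtain ⟨a, ha⟩ := Quot.exists_rep p
  obtain ⟨b, hb⟩ := Quot.exists_rep q
  obtain ⟨c, hc⟩ := Quot.exists_rep (γ t)
  have ht0 : (0:ℝ) ≤ t.1 := t.2.1
  have ht1 : t.1 ≤ 1 := t.2.2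
  have h1 : dist p (γ t) = t.1 * dist p q := by
    have h := hd ⟨0, by norm_num⟩ t
    rw [hp] at h
    rw [h]
    norm_num [abs_of_nonneg ht0, abs_sub_comm]
  have h2 : dist (γ t) q = (1 - t.1) * dist p q := by
    have h := hd t ⟨1, by norm_num⟩
    rw [hq] at h
    rw [h]
    rw [show |(t.1:ℝ) - 1| = 1 - t.1 by rw [abs_of_nonpos (by linarith)]; ring]
  have hdab : dist p q = d1 a b := by rw [← ha, ← hb]; rfl
  have hdac : dist p (γ t) = d1 a c := by rw [← ha, ← hc]; rfl
  have hdcb : dist (γ t) q = d1 c b := by rw [← hc, ← hb]; rfl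
  have hac : d1 a c = t.1 * d1 a b := by rw [← hdab, ← hdac]; exact h1
  have hcb : d1 c b = (1 - t.1) * d1 a b := by rw [← hdab, ← hdcb]; exact h2
  have hsum : d1 a c + d1 c b = d1 a b := by rw [hac, hcb]; ring
  have hkey := d1_key a b c hsum
  have hD0 : 0 ≤ d1 a b := by rw [← hdab]; exact dist_nonneg
  have hfp : starF p = a.1.1 := by rw [← ha]; rfl
  have hfq : starF q = b.1.1 := by rw [← hb]; rfl
  have hft : starF (γ t) = c.1.1 := by rw [← hc]; rfl
  rw [hfp, hfq, hft]
  rcases hD0.eq_or_lt with hD | hD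
  · -- degenerate geodesic
    have hz1 : d1 a c = 0 := by rw [hac, ← hD, mul_zero]
    have e1 : a.1.1 = c.1.1 := d1_fst_eq_of_eq_zero hz1
    have e2 : a.1.1 = b.1.1 := d1_fst_eq_of_eq_zero hD.symm
    rw [← e2, e1]
    nlinarith
  · have h' : c.1.1 * d1 a b ≤ ((1 - t.1) * a.1.1 + t.1 * b.1.1) * d1 a b := by
      calc c.1.1 * d1 a b ≤ d1 c b * a.1.1 + d1 a c * b.1.1 := hkey
        _ = ((1 - t.1) * a.1.1 + t.1 * b.1.1) * d1 a b := by rw [hac, hcb]; ring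
    exact le_of_mul_le_mul_right h' hD
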